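/- Let A ⊆ ℝ^a and B ⊆ ℝ^b (with the Euclidean norms), let D ≥ 1, and let f : A → B be a surjective non-contracting map with ‖f(x) − f(y)‖ ≤ D·‖x − y‖ for all x,y ∈ A. Then there exist maps f₁ : ℝ^a → H and f₂ : ℝ^b → H into a Hilbert space H such that: (1) f₁ and f₂ each have distortion at most 9·D + 2; and (2) f₁(x) = f₂(f(x)) for every x ∈ A. -/

import Mathlib

open scoped RealInnerProductSpace

section Identities
variable {F : Type*} [NormedAddCommGroup F] [InnerProductSpace ℝ F]

/-- Variance identity: for weights summing to 1 with barycenter `m`,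
`∑ w a ‖v a - x₀‖² = ∑ w a ‖v a - m‖² + ‖m - x₀‖²`. -/
lemma variance_identity {α : Type*} (t : Finset α) (w : α → ℝ) (v : α → F) (x₀ : F)
    (hw : ∑ a ∈ t, w a = 1) :
    ∑ a ∈ t, w a * ‖v a - x₀‖ ^ 2
      = (∑ a ∈ t, w a * ‖v a - ∑ b ∈ t, w b • v b‖ ^ 2)
        + ‖(∑ b ∈ t, w b • v b) - x₀‖ ^ 2 := by
  set m : F := ∑ b ∈ t, w b • v b with hm
  have hsum : (∑ a ∈ t, w a • (v a - m)) = 0 := by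
    simp only [smul_sub, Finset.sum_sub_distrib, ← Finset.sum_smul, hw, one_smul]
    simp [← hm]
  have expand : ∀ a ∈ t, w a * ‖v a - x₀‖ ^ 2
      = w a * ‖v a - m‖ ^ 2 + (2 * (w a * (inner ℝ (v a - m) (m - x₀) : ℝ)) + w a * ‖m - x₀‖ ^ 2) := by
    intro a _
    have h : v a - x₀ = (v a - m) + (m - x₀) := by abel
    rw [h, norm_add_sq_real]; ring
  rw [Finset.sum_congr rfl expand, Finset.sum_add_distrib, Finset.sum_add_distrib]
  have hcross : ∑ a ∈ t, 2 * (w a * (inner ℝ (v a - m) (m - x₀) : ℝ)) = 0 := by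
    have : ∑ a ∈ t, w a * (inner ℝ (v a - m) (m - x₀) : ℝ) = (inner ℝ (∑ a ∈ t, w a • (v a - m)) (m - x₀) : ℝ) := by
      rw [sum_inner]
      exact Finset.sum_congr rfl fun a _ => (real_inner_smul_left _ _ _).symm
    rw [← Finset.mul_sum, this, hsum, inner_zero_left, mul_zero]
  rw [hcross, zero_add, ← Finset.sum_mul, hw, one_mul]

lemma double_sum_identity {α : Type*} (t : Finset α) (w : α → ℝ) (v : α → F)
    (hw : ∑ a ∈ t, w a = 1) :
    ∑ a ∈ t, ∑ b ∈ t, w a * (w b * ‖v a - v b‖ ^ 2)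
      = 2 * ∑ a ∈ t, w a * ‖v a - ∑ b ∈ t, w b • v b‖ ^ 2 := by
  set m : F := ∑ b ∈ t, w b • v b with hm
  have inner_eq : ∀ a ∈ t, ∑ b ∈ t, w b * ‖v b - v a‖ ^ 2
      = (∑ b ∈ t, w b * ‖v b - m‖ ^ 2) + ‖m - v a‖ ^ 2 := fun a _ =>
    variance_identity t w v (v a) hw
  calc ∑ a ∈ t, ∑ b ∈ t, w a * (w b * ‖v a - v b‖ ^ 2)
      = ∑ a ∈ t, w a * ∑ b ∈ t, w b * ‖v b - v a‖ ^ 2 := by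
        refine Finset.sum_congr rfl fun a _ => ?_
        rw [Finset.mul_sum]
        exact Finset.sum_congr rfl fun b _ => by rw [norm_sub_rev (v a) (v b)]
    _ = ∑ a ∈ t, w a * ((∑ b ∈ t, w b * ‖v b - m‖ ^ 2) + ‖m - v a‖ ^ 2) :=
        Finset.sum_congr rfl fun a ha => by rw [inner_eq a ha]
    _ = 2 * ∑ a ∈ t, w a * ‖v a - m‖ ^ 2 := by
        simp only [mul_add, Finset.sum_add_distrib, ← Finset.sum_mul, hw, one_mul]
        rw [two_mul]
        congr 1
        exact Finset.sum_congr rfl fun a _ => by rw [norm_sub_rev]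

end Identities
section Finite
variable {E F : Type*} [NormedAddCommGroup E] [InnerProductSpace ℝ E]
  [NormedAddCommGroup F] [InnerProductSpace ℝ F] [FiniteDimensional ℝ F]

theorem kirszbraun_finite {ι : Type*} [Fintype ι] [Nonempty ι]
    (u : ι → E) (p : ι → F) (hlip : ∀ i j, ‖p i - p j‖ ≤ ‖u i - u j‖) (x₀ : E) :
    ∃ z : F, ∀ i, ‖z - p i‖ ≤ ‖x₀ - u i‖ := by
  classical
  by_cases hx : ∃ i, u i = x₀
  · obtain ⟨i₀, hi₀⟩ := hx
    refine ⟨p i₀, fun j => ?_⟩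
    calc ‖p i₀ - p j‖ ≤ ‖u i₀ - u j‖ := hlip i₀ j
      _ = ‖x₀ - u j‖ := by rw [hi₀]
  push_neg at hx
  set r : ι → ℝ := fun i => ‖x₀ - u i‖ with hr
  have hrpos : ∀ i, 0 < r i := fun i =>
    norm_pos_iff.mpr (sub_ne_zero_of_ne fun h => hx i h.symm)
  set g : F → ℝ := fun z => Finset.univ.sup' Finset.univ_nonempty
      (fun i => ‖z - p i‖ / r i) with hg
  have hgle : ∀ z i, ‖z - p i‖ / r i ≤ g z := by
    intro z i
    simp only [hg]
    exact Finset.le_sup' (fun j => ‖z - p j‖ / r j) (Finset.mem_univ i)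
  have hgcont : Continuous g := by
    apply Continuous.finset_sup'_apply Finset.univ_nonempty
    intro i _
    exact ((continuous_id.sub continuous_const).norm).div_const _
  -- existence of a global minimizer
  obtain ⟨i₁⟩ := ‹Nonempty ι›
  set g₀ : ℝ := g (p i₁) with hg₀
  have hg₀0 : 0 ≤ g₀ := le_trans (by positivity) (hgle (p i₁) i₁)
  set C : Set F := Metric.closedBall (p i₁) (g₀ * r i₁) with hC
  have hCcomp : IsCompact C := isCompact_closedBall _ _
  have hCne : (p i₁) ∈ C := Metric.mem_closedBall_self (by positivity)
  obtain ⟨z, hzC, hzmin⟩ := hCcomp.exists_isMinOn ⟨p i₁, hCne⟩ hgcont.continuousOn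
  have hzglob : ∀ y, g z ≤ g y := by
    intro y
    by_cases hy : y ∈ C
    · exact hzmin hy
    · have h1 : g₀ * r i₁ < ‖y - p i₁‖ := by
        have := Metric.mem_closedBall.not.mp hy
        push_neg at this
        simpa [dist_eq_norm] using this
      have h2 : g₀ < ‖y - p i₁‖ / r i₁ := by
        rw [lt_div_iff₀ (hrpos i₁)]
        linarith [h1]
      exact le_trans (hzmin hCne) (le_of_lt (lt_of_lt_of_le h2 (hgle y i₁)))
  set lam : ℝ := g z with hlam
  have hlam0 : 0 ≤ lam := le_trans (by positivity) (hgle z i₁)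
  -- main claim: lam ≤ 1
  have hratio : ∀ i, ‖z - p i‖ ≤ lam * r i := fun i =>
    (div_le_iff₀ (hrpos i)).mp (hgle z i)
  by_cases hlam1 : lam ≤ 1
  · exact ⟨z, fun i => le_trans (hratio i) (by nlinarith [hrpos i])⟩
  push_neg at hlam1
  exfalso
  -- active set
  set I : Finset ι := Finset.univ.filter (fun i => ‖z - p i‖ = lam * r i) with hI
  have hIne : I.Nonempty := by
    obtain ⟨i, -, hi⟩ := Finset.exists_mem_eq_sup' Finset.univ_nonempty
      (fun i => ‖z - p i‖ / r i)
    refine ⟨i, Finset.mem_filter.mpr ⟨Finset.mem_univ i, ?_⟩⟩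
    have h1 : ‖z - p i‖ / r i = lam := hi.symm
    exact (div_eq_iff (ne_of_gt (hrpos i))).mp h1
  set t : Finset F := I.image p with ht
  set K : Set F := convexHull ℝ (t : Set F) with hK
  have hKconv : Convex ℝ K := convex_convexHull _ _
  have hKcomp : IsCompact K := (t.finite_toSet).isCompact_convexHull ℝ
  have hKne : K.Nonempty := by
    obtain ⟨i, hi⟩ := hIne
    exact ⟨p i, subset_convexHull ℝ _ (Finset.mem_coe.mpr (Finset.mem_image_of_mem p hi))⟩
  have hmemK : ∀ i ∈ I, p i ∈ K :=
    fun i hi => subset_convexHull ℝ _ (Finset.mem_coe.mpr (Finset.mem_image_of_mem p hi))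
  -- z belongs to K
  have hzK : z ∈ K := by
    by_contra hzK
    obtain ⟨q, hqK, hqmin⟩ := exists_norm_eq_iInf_of_complete_convex hKne
      (hKcomp.isClosed.isComplete) hKconv z
    have hvar : ∀ w ∈ K, (inner ℝ (z - q) (w - q) : ℝ) ≤ 0 :=
      (norm_eq_iInf_iff_real_inner_le_zero hKconv hqK).mp hqmin
    have hzq : 0 < ‖z - q‖ := norm_pos_iff.mpr (sub_ne_zero_of_ne (fun h => hzK (h ▸ hqK)))
    have hstrict : ∀ w ∈ K, ‖q - w‖ < ‖z - w‖ := by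
      intro w hw
      have expand : ‖z - w‖ ^ 2
          = ‖z - q‖ ^ 2 - 2 * (inner ℝ (z - q) (w - q) : ℝ) + ‖q - w‖ ^ 2 := by
        have h : z - w = (z - q) - (w - q) := by abel
        rw [h, norm_sub_sq_real, norm_sub_rev q w]
      have h2 : ‖q - w‖ ^ 2 < ‖z - w‖ ^ 2 := by
        have := hvar w hw
        nlinarith [hzq]
      exact lt_of_pow_lt_pow_left₀ 2 (norm_nonneg _) h2
    -- move from z towards q
    set inact : Finset ι := Finset.univ.filter (fun i => ‖z - p i‖ ≠ lam * r i) with hinact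
    have hinactlt : ∀ i ∈ inact, ‖z - p i‖ < lam * r i := by
      intro i hi
      exact lt_of_le_of_ne (hratio i) (Finset.mem_filter.mp hi).2
    set τ : ℝ := if h : inact.Nonempty
      then min 1 ((inact.inf' h (fun i => lam * r i - ‖z - p i‖)) / (2 * (‖q - z‖ + 1)))
      else 1 with hτ
    have hτpos : 0 < τ := by
      rw [hτ]
      split_ifs with h
      · refine lt_min one_pos ?_
        apply div_pos
        · obtain ⟨i, hi, hieq⟩ := Finset.exists_mem_eq_inf' h (fun i => lam * r i - ‖z - p i‖)
          rw [hieq]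
          linarith [hinactlt i hi]
        · positivity
      · exact one_pos
    have hτ1 : τ ≤ 1 := by
      rw [hτ]; split_ifs with h
      · exact min_le_left _ _
      · exact le_refl 1
    set zτ : F := z + τ • (q - z) with hzτ
    have hkey : ∀ i, ‖zτ - p i‖ < lam * r i := by
      intro i
      by_cases hiact : ‖z - p i‖ = lam * r i
      · -- active: use convex combination bound
        have hiI : i ∈ I := Finset.mem_filter.mpr ⟨Finset.mem_univ i, hiact⟩
        have hcomb : zτ - p i = (1 - τ) • (z - p i) + τ • (q - p i) := by
          rw [hzτ]
          simp only [smul_sub, sub_smul, one_smul]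
          abel
        have hq_lt : ‖q - p i‖ < lam * r i := hiact ▸ hstrict (p i) (hmemK i hiI)
        calc ‖zτ - p i‖ ≤ (1 - τ) * ‖z - p i‖ + τ * ‖q - p i‖ := by
              rw [hcomb]
              refine le_trans (norm_add_le _ _) ?_
              rw [norm_smul, norm_smul, Real.norm_eq_abs, Real.norm_eq_abs,
                abs_of_nonneg (by linarith : (0:ℝ) ≤ 1 - τ), abs_of_nonneg (le_of_lt hτpos)]
          _ < (1 - τ) * (lam * r i) + τ * (lam * r i) := by
              have h1 : (1 - τ) * ‖z - p i‖ ≤ (1 - τ) * (lam * r i) := by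
                apply mul_le_mul_of_nonneg_left (le_of_eq hiact) (by linarith)
              have h2 : τ * ‖q - p i‖ < τ * (lam * r i) :=
                mul_lt_mul_of_pos_left hq_lt hτpos
              linarith
          _ = lam * r i := by ring
      · -- inactive
        have hiin : i ∈ inact := Finset.mem_filter.mpr ⟨Finset.mem_univ i, hiact⟩
        have hne : inact.Nonempty := ⟨i, hiin⟩
        have hτle : τ ≤ (inact.inf' hne (fun i => lam * r i - ‖z - p i‖)) / (2 * (‖q - z‖ + 1)) := by
          rw [hτ, dif_pos hne]
          exact min_le_right _ _
        have hinf_le : inact.inf' hne (fun i => lam * r i - ‖z - p i‖) ≤ lam * r i - ‖z - p i‖ :=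
          Finset.inf'_le _ hiin
        have hd0 : 0 < inact.inf' hne (fun i => lam * r i - ‖z - p i‖) := by
          obtain ⟨j, hj, hjeq⟩ := Finset.exists_mem_eq_inf' hne (fun i => lam * r i - ‖z - p i‖)
          rw [hjeq]; linarith [hinactlt j hj]
        have hbound : τ * ‖q - z‖ < lam * r i - ‖z - p i‖ := by
          have h2 : τ * (2 * (‖q - z‖ + 1)) ≤ inact.inf' hne (fun i => lam * r i - ‖z - p i‖) :=
            (le_div_iff₀ (by positivity)).mp hτle
          nlinarith [norm_nonneg (q - z), hτpos, hinf_le]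
        calc ‖zτ - p i‖ ≤ ‖z - p i‖ + τ * ‖q - z‖ := by
              have : zτ - p i = (z - p i) + τ • (q - z) := by rw [hzτ]; abel
              rw [this]
              refine le_trans (norm_add_le _ _) ?_
              rw [norm_smul, Real.norm_eq_abs, abs_of_nonneg (le_of_lt hτpos)]
          _ < lam * r i := by linarith
    have : g zτ < lam := by
      rw [hg]
      rw [Finset.sup'_lt_iff]
      intro i _
      rw [div_lt_iff₀ (hrpos i)]
      exact hkey i
    exact absurd (hzglob zτ) (not_le.mpr this)
  -- use convexity representation to contradict lam > 1
  obtain ⟨w, hw0, hw1, hwz⟩ := Finset.mem_convexHull'.mp hzK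
  -- for each y ∈ t choose an active index
  have hchoice : ∀ y ∈ t, ∃ i ∈ I, p i = y := fun y hy => by
    obtain ⟨i, hi, hiy⟩ := Finset.mem_image.mp hy
    exact ⟨i, hi, hiy⟩
  classical
  set idx : F → ι := fun y => if h : ∃ i ∈ I, p i = y then h.choose else i₁ with hidx
  have hidxI : ∀ y ∈ t, idx y ∈ I ∧ p (idx y) = y := by
    intro y hy
    have h := hchoice y hy
    simp only [hidx, dif_pos h]
    exact ⟨h.choose_spec.1, h.choose_spec.2⟩
  set q' : F → E := fun y => u (idx y) with hq'
  have hrho : ∀ y ∈ t, ‖z - y‖ = lam * ‖x₀ - q' y‖ := by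
    intro y hy
    obtain ⟨hyI, hyp⟩ := hidxI y hy
    have h2 : ‖z - p (idx y)‖ = lam * r (idx y) := (Finset.mem_filter.mp hyI).2
    calc ‖z - y‖ = ‖z - p (idx y)‖ := by rw [hyp]
      _ = lam * r (idx y) := h2
      _ = lam * ‖x₀ - q' y‖ := rfl
  have hpair : ∀ y ∈ t, ∀ y' ∈ t, ‖y - y'‖ ≤ ‖q' y - q' y'‖ := by
    intro y hy y' hy'
    calc ‖y - y'‖ = ‖p (idx y) - p (idx y')‖ := by rw [(hidxI y hy).2, (hidxI y' hy').2]
      _ ≤ ‖u (idx y) - u (idx y')‖ := hlip _ _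
      _ = ‖q' y - q' y'‖ := rfl
  -- the quadratic computation
  have hB1 : ∑ y ∈ t, ∑ y' ∈ t, w y * (w y' * ‖y - y'‖ ^ 2)
      = 2 * ∑ y ∈ t, w y * ‖y - z‖ ^ 2 := by
    have := double_sum_identity t w (id : F → F) hw1
    simpa [hwz] using this
  have hB2 : ∑ y ∈ t, ∑ y' ∈ t, w y * (w y' * ‖q' y - q' y'‖ ^ 2)
      = 2 * ∑ y ∈ t, w y * ‖q' y - ∑ y' ∈ t, w y' • q' y'‖ ^ 2 :=
    double_sum_identity t w q' hw1
  have hA : ∑ y ∈ t, w y * ‖q' y - x₀‖ ^ 2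
      = (∑ y ∈ t, w y * ‖q' y - ∑ y' ∈ t, w y' • q' y'‖ ^ 2)
        + ‖(∑ y' ∈ t, w y' • q' y') - x₀‖ ^ 2 :=
    variance_identity t w q' x₀ hw1
  have hle : ∑ y ∈ t, ∑ y' ∈ t, w y * (w y' * ‖y - y'‖ ^ 2)
      ≤ ∑ y ∈ t, ∑ y' ∈ t, w y * (w y' * ‖q' y - q' y'‖ ^ 2) := by
    refine Finset.sum_le_sum fun y hy => Finset.sum_le_sum fun y' hy' => ?_
    have h1 := hpair y hy y' hy'
    have h2 : ‖y - y'‖ ^ 2 ≤ ‖q' y - q' y'‖ ^ 2 := by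
      exact pow_le_pow_left₀ (norm_nonneg _) h1 2
    have := mul_le_mul_of_nonneg_left h2 (hw0 y' hy')
    exact mul_le_mul_of_nonneg_left this (hw0 y hy)
  have hSlhs : ∑ y ∈ t, w y * ‖y - z‖ ^ 2 = lam ^ 2 * ∑ y ∈ t, w y * ‖x₀ - q' y‖ ^ 2 := by
    rw [Finset.mul_sum]
    refine Finset.sum_congr rfl fun y hy => ?_
    rw [norm_sub_rev y z, hrho y hy]
    ring
  set S : ℝ := ∑ y ∈ t, w y * ‖x₀ - q' y‖ ^ 2 with hS
  have hrhseq : ∑ y ∈ t, w y * ‖q' y - x₀‖ ^ 2 = S := by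
    refine Finset.sum_congr rfl fun y hy => by rw [norm_sub_rev]
  have hSpos : 0 < S := by
    have : ∃ y ∈ t, 0 < w y := by
      by_contra hcon
      push_neg at hcon
      have : ∑ y ∈ t, w y = 0 :=
        Finset.sum_eq_zero fun y hy => le_antisymm (hcon y hy) (hw0 y hy)
      rw [hw1] at this
      norm_num at this
    obtain ⟨y, hy, hwy⟩ := this
    have hyr : 0 < ‖x₀ - q' y‖ := by
      rw [hq']
      exact norm_pos_iff.mpr (sub_ne_zero_of_ne fun h => hx (idx y) h.symm)
    have hterm : 0 < w y * ‖x₀ - q' y‖ ^ 2 := by positivity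
    have hrest : ∀ y' ∈ t, 0 ≤ w y' * ‖x₀ - q' y'‖ ^ 2 := fun y' hy' => by
      have := hw0 y' hy'; positivity
    exact lt_of_lt_of_le hterm (Finset.single_le_sum hrest hy)
  -- assemble
  have hchain : 2 * (lam ^ 2 * S) ≤ 2 * S := by
    calc 2 * (lam ^ 2 * S) = 2 * ∑ y ∈ t, w y * ‖y - z‖ ^ 2 := by rw [hSlhs]
      _ = ∑ y ∈ t, ∑ y' ∈ t, w y * (w y' * ‖y - y'‖ ^ 2) := hB1.symm
      _ ≤ ∑ y ∈ t, ∑ y' ∈ t, w y * (w y' * ‖q' y - q' y'‖ ^ 2) := hle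
      _ = 2 * ∑ y ∈ t, w y * ‖q' y - ∑ y' ∈ t, w y' • q' y'‖ ^ 2 := hB2
      _ ≤ 2 * S := by
          have h := hA
          rw [hrhseq] at h
          nlinarith [sq_nonneg ‖(∑ y' ∈ t, w y' • q' y') - x₀‖]
  have hfac : 0 < (lam - 1) * (lam + 1) * S :=
    mul_pos (mul_pos (by linarith) (by linarith)) hSpos
  nlinarith [hchain, hfac]

end Finite
theorem kirszbraun_onePoint {E F : Type*} [NormedAddCommGroup E] [InnerProductSpace ℝ E]
    [NormedAddCommGroup F] [InnerProductSpace ℝ F] [FiniteDimensional ℝ F]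
    (s : Set E) (φ : E → F) (hφ : ∀ x ∈ s, ∀ y ∈ s, ‖φ x - φ y‖ ≤ ‖x - y‖) (x₀ : E) :
    ∃ z : F, ∀ u ∈ s, ‖z - φ u‖ ≤ ‖x₀ - u‖ := by
  classical
  rcases s.eq_empty_or_nonempty with rfl | ⟨u₀, hu₀⟩
  · exact ⟨0, fun u hu => absurd hu (Set.notMem_empty u)⟩
  set T : s → Set F := fun u => Metric.closedBall (φ u) ‖x₀ - (u : E)‖ with hT
  have hTclosed : ∀ u, IsClosed (T u) := fun u => Metric.isClosed_closedBall
  set u₀' : s := ⟨u₀, hu₀⟩ with hu₀'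
  have hfin : ∀ v : Finset s, (T u₀' ∩ ⋂ i ∈ v, T i).Nonempty := by
    intro v
    set v' : Finset s := insert u₀' v with hv'
    have hne : Nonempty {i // i ∈ v'} := ⟨⟨u₀', Finset.mem_insert_self _ _⟩⟩
    obtain ⟨z, hz⟩ := kirszbraun_finite (ι := {i // i ∈ v'})
      (fun i => ((i : s) : E)) (fun i => φ (i : s))
      (fun i j => hφ _ (i : s).2 _ (j : s).2) x₀
    refine ⟨z, ?_, ?_⟩
    · have := hz ⟨u₀', Finset.mem_insert_self _ _⟩
      simpa [hT, Metric.mem_closedBall, dist_eq_norm] using this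
    · rw [Set.mem_iInter₂]
      intro i hi
      have := hz ⟨i, Finset.mem_insert_of_mem hi⟩
      simpa [hT, Metric.mem_closedBall, dist_eq_norm] using this
  have hcomp : IsCompact (T u₀') := isCompact_closedBall _ _
  obtain ⟨z, -, hz⟩ := hcomp.inter_iInter_nonempty T hTclosed hfin
  refine ⟨z, fun u hu => ?_⟩
  have := Set.mem_iInter.mp hz ⟨u, hu⟩
  simpa [hT, Metric.mem_closedBall, dist_eq_norm] using this

theorem kirszbraun {E F : Type*} [NormedAddCommGroup E] [InnerProductSpace ℝ E]
    [NormedAddCommGroup F] [InnerProductSpace ℝ F] [FiniteDimensional ℝ F]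
    (s : Set E) (φ : E → F) (hφ : ∀ x ∈ s, ∀ y ∈ s, ‖φ x - φ y‖ ≤ ‖x - y‖) :
    ∃ g : E → F, (∀ x y, ‖g x - g y‖ ≤ ‖x - y‖) ∧ ∀ x ∈ s, g x = φ x := by
  classical
  set S : Set (Set (E × F)) :=
    {G | (∀ x ∈ s, (x, φ x) ∈ G) ∧ ∀ p ∈ G, ∀ q ∈ G,
      ‖(Prod.snd p : F) - Prod.snd q‖ ≤ ‖(Prod.fst p : E) - Prod.fst q‖} with hS
  have hG₀ : (fun x => (x, φ x)) '' s ∈ S := by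
    constructor
    · exact fun x hx => ⟨x, hx, rfl⟩
    · rintro p ⟨x, hx, rfl⟩ q ⟨y, hy, rfl⟩
      exact hφ x hx y hy
  have hchain : ∀ c ⊆ S, IsChain (· ⊆ ·) c → c.Nonempty →
      ∃ ub ∈ S, ∀ G ∈ c, G ⊆ ub := by
    intro c hcS hc ⟨G₁, hG₁⟩
    refine ⟨⋃₀ c, ⟨?_, ?_⟩, fun G hG => Set.subset_sUnion_of_mem hG⟩
    · exact fun x hx => Set.mem_sUnion.mpr ⟨G₁, hG₁, (hcS hG₁).1 x hx⟩
    · rintro p hp q hq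
      obtain ⟨Gp, hGp, hpGp⟩ := Set.mem_sUnion.mp hp
      obtain ⟨Gq, hGq, hqGq⟩ := Set.mem_sUnion.mp hq
      rcases hc.total hGp hGq with h | h
      · exact (hcS hGq).2 p (h hpGp) q hqGq
      · exact (hcS hGp).2 p hpGp q (h hqGq)
  obtain ⟨M, hM₀, hMmax⟩ := zorn_subset_nonempty S hchain _ hG₀
  have hMS : M ∈ S := hMmax.prop
  have hMfun : ∀ x z z', (x, z) ∈ M → (x, z') ∈ M → z = z' := by
    intro x z z' h1 h2
    have := hMS.2 (x, z) h1 (x, z') h2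
    simp only [sub_self, norm_zero] at this
    have := le_antisymm this (norm_nonneg _)
    rwa [norm_eq_zero, sub_eq_zero] at this
  have htotal : ∀ x₀ : E, ∃ z, (x₀, z) ∈ M := by
    intro x₀
    by_contra hcon
    push_neg at hcon
    set dom : Set E := Prod.fst '' M with hdom
    set ψ : E → F := fun x => if h : ∃ z, (x, z) ∈ M then h.choose else 0 with hψ
    have hψM : ∀ x ∈ dom, (x, ψ x) ∈ M := by
      intro x hx
      obtain ⟨p, hp, hpx⟩ := hx
      have h : ∃ z, (x, z) ∈ M := by
        refine ⟨p.2, ?_⟩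
        have h2 : (p.1, p.2) ∈ M := by rwa [Prod.mk.eta]
        rwa [hpx] at h2
      simp only [hψ, dif_pos h]
      exact h.choose_spec
    have hψlip : ∀ x ∈ dom, ∀ y ∈ dom, ‖ψ x - ψ y‖ ≤ ‖x - y‖ := by
      intro x hx y hy
      exact hMS.2 (x, ψ x) (hψM x hx) (y, ψ y) (hψM y hy)
    obtain ⟨z₀, hz₀⟩ := kirszbraun_onePoint dom ψ hψlip x₀
    set M' : Set (E × F) := insert (x₀, z₀) M with hM'
    have hM'S : M' ∈ S := by
      constructor
      · exact fun x hx => Set.mem_insert_of_mem _ (hMS.1 x hx)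
      · rintro p (rfl | hp) q (rfl | hq)
        · simp
        · have hqdom : q.1 ∈ dom := ⟨q, hq, rfl⟩
          have hq2 : q.2 = ψ q.1 := hMfun q.1 q.2 (ψ q.1) (by rwa [Prod.mk.eta]) (hψM _ hqdom)
          simp only [hq2]
          exact hz₀ q.1 hqdom
        · have hpdom : p.1 ∈ dom := ⟨p, hp, rfl⟩
          have hp2 : p.2 = ψ p.1 := hMfun p.1 p.2 (ψ p.1) (by rwa [Prod.mk.eta]) (hψM _ hpdom)
          simp only [hp2]
          rw [norm_sub_rev (ψ p.1) z₀, norm_sub_rev p.1 x₀]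
          exact hz₀ p.1 hpdom
        · exact hMS.2 p hp q hq
    have hsub : M ⊆ M' := Set.subset_insert _ _
    have : M' ⊆ M := hMmax.2 hM'S hsub
    exact hcon z₀ (this (Set.mem_insert _ _))
  set g : E → F := fun x => (htotal x).choose with hg
  have hgM : ∀ x, (x, g x) ∈ M := fun x => (htotal x).choose_spec
  refine ⟨g, fun x y => hMS.2 (x, g x) (hgM x) (y, g y) (hgM y), fun x hx => ?_⟩
  exact hMfun x (g x) (φ x) (hgM x) (hMS.1 x hx)
lemma withLp_pair_norm {α β : Type*} [NormedAddCommGroup α] [NormedAddCommGroup β]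
    (u u' : α) (w w' : β) :
    ‖(WithLp.equiv 2 (α × β)).symm (u, w) - (WithLp.equiv 2 (α × β)).symm (u', w')‖
      = Real.sqrt (‖u - u'‖ ^ 2 + ‖w - w'‖ ^ 2) := by
  rw [WithLp.equiv_symm_apply, ← WithLp.toLp_sub, Prod.mk_sub_mk]
  rw [WithLp.prod_norm_eq_of_L2]
  rfl

/-- External bi-Lipschitz extension theorem (with explicit constant `9D + 2`):
a surjective non-contracting `D`-Lipschitz map `f : A → B` between subsets
`A ⊆ ℝ^a` and `B ⊆ ℝ^b` admits an external extension, i.e. maps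
`f₁ : ℝ^a → H` and `f₂ : ℝ^b → H` into a Hilbert space `H`, each of distortion
at most `9D + 2`, with `f₁ = f₂ ∘ f` on `A`. -/
theorem external_bilipschitz_extension
    (a b : ℕ) (A : Set (EuclideanSpace ℝ (Fin a)))
    (B : Set (EuclideanSpace ℝ (Fin b))) (D : ℝ) (hD : 1 ≤ D)
    (f : EuclideanSpace ℝ (Fin a) → EuclideanSpace ℝ (Fin b))
    (hfmem : ∀ x ∈ A, f x ∈ B)
    (hfsurj : ∀ y ∈ B, ∃ x ∈ A, f x = y)
    (hfnc : ∀ x ∈ A, ∀ y ∈ A, ‖x - y‖ ≤ ‖f x - f y‖)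
    (hflip : ∀ x ∈ A, ∀ y ∈ A, ‖f x - f y‖ ≤ D * ‖x - y‖) :
    ∃ (H : Type) (_ : NormedAddCommGroup H) (_ : InnerProductSpace ℝ H)
      (_ : CompleteSpace H)
      (f₁ : EuclideanSpace ℝ (Fin a) → H) (f₂ : EuclideanSpace ℝ (Fin b) → H),
      (∃ c₁ : ℝ, 0 < c₁ ∧ ∀ x y : EuclideanSpace ℝ (Fin a),
        c₁ * ‖x - y‖ ≤ ‖f₁ x - f₁ y‖ ∧
        ‖f₁ x - f₁ y‖ ≤ c₁ * (9 * D + 2) * ‖x - y‖) ∧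
      (∃ c₂ : ℝ, 0 < c₂ ∧ ∀ x y : EuclideanSpace ℝ (Fin b),
        c₂ * ‖x - y‖ ≤ ‖f₂ x - f₂ y‖ ∧
        ‖f₂ x - f₂ y‖ ≤ c₂ * (9 * D + 2) * ‖x - y‖) ∧
      (∀ x ∈ A, f₁ x = f₂ (f x)) := by
  classical
  have hD0 : (0:ℝ) < D := lt_of_lt_of_le one_pos hD
  -- Lipschitz extension of `f` with constant `D` (via Kirszbraun for `D⁻¹ • f`)
  have hφ1 : ∀ x ∈ A, ∀ y ∈ A, ‖(D⁻¹ • f x) - (D⁻¹ • f y)‖ ≤ ‖x - y‖ := by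
    intro x hx y hy
    rw [← smul_sub, norm_smul, Real.norm_eq_abs, abs_of_pos (inv_pos.mpr hD0)]
    rw [inv_mul_le_iff₀ hD0]
    exact hflip x hx y hy
  obtain ⟨F₁, hF₁lip, hF₁eq⟩ := kirszbraun A (fun x => D⁻¹ • f x) hφ1
  set FF : EuclideanSpace ℝ (Fin a) → EuclideanSpace ℝ (Fin b) := fun x => D • F₁ x with hFF
  have hFFlip : ∀ x y, ‖FF x - FF y‖ ≤ D * ‖x - y‖ := by
    intro x y
    simp only [hFF]
    rw [← smul_sub, norm_smul, Real.norm_eq_abs, abs_of_pos hD0]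
    exact mul_le_mul_of_nonneg_left (hF₁lip x y) (le_of_lt hD0)
  have hFFeq : ∀ x ∈ A, FF x = f x := by
    intro x hx
    simp only [hFF]
    rw [hF₁eq x hx, smul_inv_smul₀ (ne_of_gt hD0)]
  -- Lipschitz extension of the inverse, with constant 1
  set ψ : EuclideanSpace ℝ (Fin b) → EuclideanSpace ℝ (Fin a) :=
    fun y => if h : y ∈ B then (hfsurj y h).choose else 0 with hψ
  have hψA : ∀ y ∈ B, ψ y ∈ A ∧ f (ψ y) = y := by
    intro y hy
    simp only [hψ, dif_pos hy]
    exact ⟨(hfsurj y hy).choose_spec.1, (hfsurj y hy).choose_spec.2⟩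
  have hψlip : ∀ y ∈ B, ∀ y' ∈ B, ‖ψ y - ψ y'‖ ≤ ‖y - y'‖ := by
    intro y hy y' hy'
    obtain ⟨hA1, hf1⟩ := hψA y hy
    obtain ⟨hA2, hf2⟩ := hψA y' hy'
    calc ‖ψ y - ψ y'‖ ≤ ‖f (ψ y) - f (ψ y')‖ := hfnc _ hA1 _ hA2
      _ = ‖y - y'‖ := by rw [hf1, hf2]
  obtain ⟨G, hGlip, hGeq⟩ := kirszbraun B ψ hψlip
  have hGf : ∀ x ∈ A, G (f x) = x := by
    intro x hx
    have hfxB : f x ∈ B := hfmem x hx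
    obtain ⟨hA1, hf1⟩ := hψA (f x) hfxB
    have hinj : ψ (f x) = x := by
      have h1 : ‖x - ψ (f x)‖ ≤ ‖f x - f (ψ (f x))‖ := hfnc x hx _ hA1
      rw [hf1, sub_self, norm_zero] at h1
      have := le_antisymm h1 (norm_nonneg _)
      rw [norm_eq_zero, sub_eq_zero] at this
      exact this.symm
    rw [hGeq (f x) hfxB, hinj]
  -- assemble
  refine ⟨WithLp 2 (EuclideanSpace ℝ (Fin a) × EuclideanSpace ℝ (Fin b)),
    inferInstance, inferInstance, inferInstance,
    fun x => (WithLp.equiv 2 _).symm (x, FF x),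
    fun y => (WithLp.equiv 2 _).symm (G y, y), ⟨1, one_pos, ?_⟩, ⟨1, one_pos, ?_⟩, ?_⟩
  · intro x y
    rw [withLp_pair_norm]
    constructor
    · rw [one_mul]
      calc ‖x - y‖ = Real.sqrt (‖x - y‖ ^ 2) := (Real.sqrt_sq (norm_nonneg _)).symm
        _ ≤ Real.sqrt (‖x - y‖ ^ 2 + ‖FF x - FF y‖ ^ 2) :=
            Real.sqrt_le_sqrt (by nlinarith [sq_nonneg ‖FF x - FF y‖])
    · rw [one_mul]
      have hb : ‖x - y‖ ^ 2 + ‖FF x - FF y‖ ^ 2 ≤ ((9 * D + 2) * ‖x - y‖) ^ 2 := by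
        have h1 := hFFlip x y
        nlinarith [norm_nonneg (x - y), norm_nonneg (FF x - FF y), sq_nonneg ‖x - y‖]
      calc Real.sqrt (‖x - y‖ ^ 2 + ‖FF x - FF y‖ ^ 2)
          ≤ Real.sqrt (((9 * D + 2) * ‖x - y‖) ^ 2) := Real.sqrt_le_sqrt hb
        _ = (9 * D + 2) * ‖x - y‖ := Real.sqrt_sq (by positivity)
  · intro x y
    rw [withLp_pair_norm]
    constructor
    · rw [one_mul]
      calc ‖x - y‖ = Real.sqrt (‖x - y‖ ^ 2) := (Real.sqrt_sq (norm_nonneg _)).symm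
        _ ≤ Real.sqrt (‖G x - G y‖ ^ 2 + ‖x - y‖ ^ 2) :=
            Real.sqrt_le_sqrt (by nlinarith [sq_nonneg ‖G x - G y‖])
    · rw [one_mul]
      have hb : ‖G x - G y‖ ^ 2 + ‖x - y‖ ^ 2 ≤ ((9 * D + 2) * ‖x - y‖) ^ 2 := by
        have h1 := hGlip x y
        have h2 : ‖G x - G y‖ ^ 2 ≤ ‖x - y‖ ^ 2 :=
          pow_le_pow_left₀ (norm_nonneg _) h1 2
        have h3 : (2:ℝ) ≤ (9 * D + 2) ^ 2 := by nlinarith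
        calc ‖G x - G y‖ ^ 2 + ‖x - y‖ ^ 2 ≤ 2 * ‖x - y‖ ^ 2 := by linarith
          _ ≤ (9 * D + 2) ^ 2 * ‖x - y‖ ^ 2 :=
              mul_le_mul_of_nonneg_right h3 (sq_nonneg _)
          _ = ((9 * D + 2) * ‖x - y‖) ^ 2 := by ring
      calc Real.sqrt (‖G x - G y‖ ^ 2 + ‖x - y‖ ^ 2)
          ≤ Real.sqrt (((9 * D + 2) * ‖x - y‖) ^ 2) := Real.sqrt_le_sqrt hb
        _ = (9 * D + 2) * ‖x - y‖ := Real.sqrt_sq (by positivity)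
  · intro x hx
    exact congrArg _ (Prod.ext (hGf x hx).symm (hFFeq x hx))
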